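/- arXiv:1210.6023 — 2 statements merged into one kernel-verified Lean document; each statement's English description precedes it below -/
import Mathlib

section
/- Fix real numbers p > 0 and j0 ≥ 0, and let C ∈ ℝ satisfy C² = j0²·p². For n ∈ ℕ set G(n) = sgn(C)·j0·(n+1), F(n) = (j0² + (n+1)² − 1)/2, and ε_n = √(p²/(j0² + (n+1)² − 1)). Then for every real j with j > 1/2 and j ≥ j0, the sequence n ↦ ε_n · √((2F(n) + 1 − j² − G(n)²/j²)/((2j+1)(2j−1))) converges, as n → ∞, to √((p² − C²/j²)/((2j+1)(2j−1))), where √ denotes the real square root. (This is the statement lim_{n→∞} ε_n α_j^{F(n),G(n)} = α̃_j^{p²,C} of Proposition 1.) -/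
/- STATEMENT 1: lim_{n→∞} ε_n · α_j^{F(n),G(n)} = α̃_j^{p²,C}, where
   ε_n = √(p²/(j0² + (n+1)² − 1)), G(n) = sgn(C)·j0·(n+1),
   F(n) = (j0² + (n+1)² − 1)/2,
   α_j^{F,G} = √((2F + 1 − j² − G²/j²)/((2j+1)(2j−1))),
   α̃_j^{p²,C} = √((p² − C²/j²)/((2j+1)(2j−1))). -/
theorem contraction_alpha_limit (p j0 C : ℝ) (hp : 0 < p) (hj0 : 0 ≤ j0)
    (hC : C ^ 2 = j0 ^ 2 * p ^ 2) (j : ℝ) (hj : 1 / 2 < j) (hjj0 : j0 ≤ j) :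
    Filter.Tendsto
      (fun n : ℕ =>
        Real.sqrt (p ^ 2 / (j0 ^ 2 + ((n : ℝ) + 1) ^ 2 - 1)) *
          Real.sqrt
            ((2 * ((j0 ^ 2 + ((n : ℝ) + 1) ^ 2 - 1) / 2) + 1 - j ^ 2 -
                (Real.sign C * j0 * ((n : ℝ) + 1)) ^ 2 / j ^ 2) /
              ((2 * j + 1) * (2 * j - 1))))
      Filter.atTop
      (nhds (Real.sqrt ((p ^ 2 - C ^ 2 / j ^ 2) / ((2 * j + 1) * (2 * j - 1))))) := by
  have hj2 : (0:ℝ) < j := lt_trans (by norm_num) hj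
  have hjne : j ≠ 0 := ne_of_gt hj2
  have hD : (0:ℝ) < (2*j+1)*(2*j-1) := by nlinarith
  have hDne : ((2*j+1)*(2*j-1)) ≠ 0 := hD.ne'
  have hsgn : (Real.sign C * j0)^2 = j0^2 := by
    rcases lt_trichotomy C 0 with h|h|h
    · rw [Real.sign_of_neg h]; ring
    · subst h
      have hp2 : p^2 ≠ 0 := by positivity
      have hz : j0^2 * p^2 = 0 := by linarith [hC]
      have h0 : j0 = 0 := by
        have h2 := (mul_eq_zero.mp hz).resolve_right hp2
        exact pow_eq_zero_iff two_ne_zero |>.mp h2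
      simp [h0]
    · rw [Real.sign_of_pos h]; ring
  set K : ℝ := 1 - j^2 + (j0^2/j^2)*(j0^2-1) with hK
  have hsT : Filter.Tendsto (fun n : ℕ => j0^2 + ((n:ℝ)+1)^2 - 1) Filter.atTop Filter.atTop := by
    refine Filter.tendsto_atTop_mono ?_ tendsto_natCast_atTop_atTop
    intro n
    nlinarith [sq_nonneg j0, Nat.cast_nonneg (α := ℝ) n]
  have hs0 : ∀ᶠ n : ℕ in Filter.atTop, 0 < j0^2 + ((n:ℝ)+1)^2 - 1 :=
    hsT.eventually_gt_atTop 0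
  have hinv : Filter.Tendsto (fun n : ℕ => (j0^2 + ((n:ℝ)+1)^2 - 1)⁻¹) Filter.atTop (nhds 0) :=
    hsT.inv_tendsto_atTop
  have hg : Filter.Tendsto
      (fun n : ℕ => p^2/((2*j+1)*(2*j-1)) * (1 - j0^2/j^2)
        + p^2/((2*j+1)*(2*j-1)) * K * (j0^2 + ((n:ℝ)+1)^2 - 1)⁻¹)
      Filter.atTop (nhds (p^2/((2*j+1)*(2*j-1)) * (1 - j0^2/j^2))) := by
    have h2 := hinv.const_mul (p^2/((2*j+1)*(2*j-1)) * K)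
    simpa using tendsto_const_nhds.add h2
  have hlim := hg.sqrt
  have hval : Real.sqrt (p^2/((2*j+1)*(2*j-1)) * (1 - j0^2/j^2))
      = Real.sqrt ((p^2 - C^2/j^2)/((2*j+1)*(2*j-1))) := by
    congr 1
    rw [hC]
    field_simp
  rw [← hval]
  refine Filter.Tendsto.congr' ?_ hlim
  filter_upwards [hs0] with n hn
  have hsne : j0^2 + ((n:ℝ)+1)^2 - 1 ≠ 0 := hn.ne'
  have hG : (Real.sign C * j0 * ((n:ℝ)+1))^2 = j0^2*((n:ℝ)+1)^2 := by
    rw [mul_pow, hsgn]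
  rw [← Real.sqrt_mul (by positivity)]
  congr 1
  rw [hG, hK]
  field_simp
  ring
end

section
/- Fix real numbers p > 0 and j0 ≥ 0, and let C ∈ ℝ satisfy C² = j0²·p². For n ∈ ℕ set G(n) = sgn(C)·j0·(n+1), F(n) = (j0² + (n+1)² − 1)/2, ε_n = √(p²/(j0² + (n+1)² − 1)), α_j(n) = √((2F(n) + 1 − j² − G(n)²/j²)/((2j+1)(2j−1))), and β_j(n) = G(n)/(j(j+1)). Then for every real j with j > 1/2 and j ≥ j0, and every real m with −j ≤ m ≤ j, the following three limits hold as n → ∞: (i) ε_n·α_j(n)·√((j+m)(j−m)) → α̃_j·√((j+m)(j−m)); (ii) ε_n·β_j(n)·m → (C/(j(j+1)))·m; (iii) ε_n·α_{j+1}(n)·√((j+m+1)(j−m+1)) → α̃_{j+1}·√((j+m+1)(j−m+1)); where α̃_j = √((p² − C²/j²)/((2j+1)(2j−1))). (These are the limits of the matrix elements ⟨j+k, m| ρ_{F(n),G(n)}(ε_n N₃) |j, m⟩ for k = −1, 0, 1 in Theorem 1, converging to the matrix elements of η_{p²,C}(P₃).) -/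
/-- Contraction parameter ε_n = √(p²/(j0² + (n+1)² − 1)). -/
noncomputable def epsSeq (p j0 : ℝ) (n : ℕ) : ℝ :=
  Real.sqrt (p ^ 2 / (j0 ^ 2 + ((n : ℝ) + 1) ^ 2 - 1))

/-- G(n) = sgn(C)·j0·(n+1). -/
noncomputable def Gseq (C j0 : ℝ) (n : ℕ) : ℝ :=
  Real.sign C * j0 * ((n : ℝ) + 1)

/-- F(n) = (j0² + (n+1)² − 1)/2. -/
noncomputable def Fseq (j0 : ℝ) (n : ℕ) : ℝ :=
  (j0 ^ 2 + ((n : ℝ) + 1) ^ 2 - 1) / 2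

/-- α_j(n) = √((2F(n) + 1 − j² − G(n)²/j²)/((2j+1)(2j−1))). -/
noncomputable def alphaSeq (p j0 C j : ℝ) (n : ℕ) : ℝ :=
  Real.sqrt
    ((2 * Fseq j0 n + 1 - j ^ 2 - (Gseq C j0 n) ^ 2 / j ^ 2) /
      ((2 * j + 1) * (2 * j - 1)))

/-- β_j(n) = G(n)/(j(j+1)). -/
noncomputable def betaSeq (C j0 j : ℝ) (n : ℕ) : ℝ :=
  Gseq C j0 n / (j * (j + 1))

/-- α̃_j = √((p² − C²/j²)/((2j+1)(2j−1))). -/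
noncomputable def alphaTilde (p C j : ℝ) : ℝ :=
  Real.sqrt ((p ^ 2 - C ^ 2 / j ^ 2) / ((2 * j + 1) * (2 * j - 1)))

section Aux
open Filter Real
private lemma D_tendsto (j0 : ℝ) :
    Tendsto (fun n : ℕ => j0 ^ 2 + ((n : ℝ) + 1) ^ 2 - 1) atTop atTop := by
  have h1 : Tendsto (fun n : ℕ => ((n : ℝ) + 1)) atTop atTop :=
    tendsto_atTop_add_const_right _ 1 tendsto_natCast_atTop_atTop
  have h2 : Tendsto (fun n : ℕ => ((n : ℝ) + 1) ^ 2) atTop atTop :=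
    (tendsto_pow_atTop (by norm_num : 2 ≠ 0)).comp h1
  have h3 := tendsto_atTop_add_const_left atTop (j0 ^ 2) h2
  have h4 := tendsto_atTop_add_const_right atTop (-1) h3
  simpa [sub_eq_add_neg] using h4

private lemma D_pos (j0 : ℝ) {n : ℕ} (hn : 1 ≤ n) :
    0 < j0 ^ 2 + ((n : ℝ) + 1) ^ 2 - 1 := by
  have : (1 : ℝ) ≤ (n : ℝ) := by exact_mod_cast hn
  nlinarith [sq_nonneg j0]

private lemma Gsq (p j0 C : ℝ) (hp : 0 < p) (hC : C ^ 2 = j0 ^ 2 * p ^ 2) (n : ℕ) :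
    (Gseq C j0 n) ^ 2 = j0 ^ 2 * ((n : ℝ) + 1) ^ 2 := by
  unfold Gseq
  rcases eq_or_ne C 0 with h | h
  · have hp2 : 0 < p ^ 2 := pow_pos hp 2
    have hj2 : j0 ^ 2 = 0 := by
      rw [h] at hC; nlinarith [sq_nonneg j0]
    simp [h, hj2]
  · rcases lt_or_gt_of_ne h with hlt | hgt
    · rw [Real.sign_of_neg hlt]; ring
    · rw [Real.sign_of_pos hgt]; ring

private lemma arg_eq (p j0 j K t : ℝ) (hj : j ≠ 0)
    (hD : j0 ^ 2 + t ^ 2 - 1 ≠ 0) (hK : K ≠ 0) :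
    p ^ 2 / (j0 ^ 2 + t ^ 2 - 1) *
      ((2 * ((j0 ^ 2 + t ^ 2 - 1) / 2) + 1 - j ^ 2 - j0 ^ 2 * t ^ 2 / j ^ 2) / K)
    = p ^ 2 / K * ((1 - j0 ^ 2 / j ^ 2) +
        ((j0 ^ 2 - j ^ 2) - (1 - j0 ^ 2 / j ^ 2) * (j0 ^ 2 - 1)) /
          (j0 ^ 2 + t ^ 2 - 1)) := by
  field_simp
  ring

private lemma eps_alpha (p j0 C : ℝ) (hp : 0 < p) (hj0 : 0 ≤ j0)
    (hC : C ^ 2 = j0 ^ 2 * p ^ 2) (j : ℝ) (hj : 1 / 2 < j) :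
    Tendsto (fun n : ℕ => epsSeq p j0 n * alphaSeq p j0 C j n) atTop
      (nhds (alphaTilde p C j)) := by
  have hK : 0 < (2 * j + 1) * (2 * j - 1) := by nlinarith
  have hjne : j ≠ 0 := by positivity
  have hlim : Tendsto
      (fun n : ℕ => p ^ 2 / ((2 * j + 1) * (2 * j - 1)) *
        ((1 - j0 ^ 2 / j ^ 2) +
          ((j0 ^ 2 - j ^ 2) - (1 - j0 ^ 2 / j ^ 2) * (j0 ^ 2 - 1)) /
            (j0 ^ 2 + ((n : ℝ) + 1) ^ 2 - 1))) atTop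
      (nhds (p ^ 2 / ((2 * j + 1) * (2 * j - 1)) * ((1 - j0 ^ 2 / j ^ 2) + 0))) :=
    tendsto_const_nhds.mul
      (tendsto_const_nhds.add (tendsto_const_nhds.div_atTop (D_tendsto j0)))
  have heq : p ^ 2 / ((2 * j + 1) * (2 * j - 1)) * ((1 - j0 ^ 2 / j ^ 2) + 0)
      = (p ^ 2 - C ^ 2 / j ^ 2) / ((2 * j + 1) * (2 * j - 1)) := by
    rw [hC]; field_simp; ring
  rw [heq] at hlim
  have hev : ∀ᶠ n : ℕ in atTop, Real.sqrt
      (p ^ 2 / ((2 * j + 1) * (2 * j - 1)) *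
        ((1 - j0 ^ 2 / j ^ 2) +
          ((j0 ^ 2 - j ^ 2) - (1 - j0 ^ 2 / j ^ 2) * (j0 ^ 2 - 1)) /
            (j0 ^ 2 + ((n : ℝ) + 1) ^ 2 - 1)))
      = epsSeq p j0 n * alphaSeq p j0 C j n := by
    filter_upwards [eventually_ge_atTop 1] with n hn
    have hD := D_pos j0 hn
    unfold epsSeq alphaSeq Fseq
    rw [Gsq p j0 C hp hC n, ← Real.sqrt_mul (div_nonneg (sq_nonneg p) hD.le)]
    congr 1
    exact (arg_eq p j0 j ((2 * j + 1) * (2 * j - 1)) ((n : ℝ) + 1) hjne hD.ne' hK.ne').symm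
  exact (hlim.sqrt.congr' hev)

private lemma eps_np1 (p j0 : ℝ) (hp : 0 < p) :
    Tendsto (fun n : ℕ => epsSeq p j0 n * ((n : ℝ) + 1)) atTop (nhds p) := by
  have hlim : Tendsto
      (fun n : ℕ => p ^ 2 * (1 + (1 - j0 ^ 2) / (j0 ^ 2 + ((n : ℝ) + 1) ^ 2 - 1))) atTop
      (nhds (p ^ 2 * (1 + 0))) :=
    tendsto_const_nhds.mul
      (tendsto_const_nhds.add (tendsto_const_nhds.div_atTop (D_tendsto j0)))
  have heq : p ^ 2 * (1 + 0) = p ^ 2 := by ring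
  rw [heq] at hlim
  have hev : ∀ᶠ n : ℕ in atTop, Real.sqrt
      (p ^ 2 * (1 + (1 - j0 ^ 2) / (j0 ^ 2 + ((n : ℝ) + 1) ^ 2 - 1)))
      = epsSeq p j0 n * ((n : ℝ) + 1) := by
    filter_upwards [eventually_ge_atTop 1] with n hn
    have hD := D_pos j0 hn
    have hn1 : (0 : ℝ) ≤ (n : ℝ) + 1 := by positivity
    unfold epsSeq
    have h1 : p ^ 2 * (1 + (1 - j0 ^ 2) / (j0 ^ 2 + ((n : ℝ) + 1) ^ 2 - 1))
        = (p ^ 2 / (j0 ^ 2 + ((n : ℝ) + 1) ^ 2 - 1)) * (((n : ℝ) + 1) ^ 2) := by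
      field_simp [hD.ne']
      ring
    rw [h1, Real.sqrt_mul (div_nonneg (sq_nonneg p) hD.le), Real.sqrt_sq hn1]
  have := hlim.sqrt.congr' hev
  rwa [Real.sqrt_sq hp.le] at this

private lemma C_eq (p j0 C : ℝ) (hp : 0 < p) (hj0 : 0 ≤ j0)
    (hC : C ^ 2 = j0 ^ 2 * p ^ 2) : Real.sign C * (j0 * p) = C := by
  have habs : |C| = j0 * p := by
    rw [← Real.sqrt_sq_eq_abs, hC, Real.sqrt_mul (sq_nonneg j0),
      Real.sqrt_sq hj0, Real.sqrt_sq hp.le]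
  rcases lt_trichotomy C 0 with h | h | h
  · rw [Real.sign_of_neg h, ← habs, abs_of_neg h]; ring
  · rw [h] at habs ⊢; simp [← habs]
  · rw [Real.sign_of_pos h, ← habs, abs_of_pos h]; ring

end Aux

/- STATEMENT 2: convergence of the three matrix elements of ρ_{F(n),G(n)}(ε_n N₃)
   to those of η_{p²,C}(P₃). -/
theorem contraction_N3_matrix_elements (p j0 C : ℝ) (hp : 0 < p) (hj0 : 0 ≤ j0)
    (hC : C ^ 2 = j0 ^ 2 * p ^ 2) (j : ℝ) (hj : 1 / 2 < j) (hjj0 : j0 ≤ j)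
    (m : ℝ) (hm1 : -j ≤ m) (hm2 : m ≤ j) :
    Filter.Tendsto
        (fun n : ℕ => epsSeq p j0 n * alphaSeq p j0 C j n * Real.sqrt ((j + m) * (j - m)))
        Filter.atTop (nhds (alphaTilde p C j * Real.sqrt ((j + m) * (j - m)))) ∧
    Filter.Tendsto
        (fun n : ℕ => epsSeq p j0 n * betaSeq C j0 j n * m)
        Filter.atTop (nhds (C / (j * (j + 1)) * m)) ∧
    Filter.Tendsto
        (fun n : ℕ => epsSeq p j0 n * alphaSeq p j0 C (j + 1) n *
          Real.sqrt ((j + m + 1) * (j - m + 1)))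
        Filter.atTop
        (nhds (alphaTilde p C (j + 1) * Real.sqrt ((j + m + 1) * (j - m + 1)))) := by
  refine ⟨?_, ?_, ?_⟩
  · exact (eps_alpha p j0 C hp hj0 hC j hj).mul_const _
  · have h1 := (eps_np1 p j0 hp).mul_const (Real.sign C * j0 / (j * (j + 1)) * m)
    have hev : (fun n : ℕ => epsSeq p j0 n * ((n : ℝ) + 1) *
        (Real.sign C * j0 / (j * (j + 1)) * m))
        = fun n : ℕ => epsSeq p j0 n * betaSeq C j0 j n * m := by
      funext n; unfold betaSeq Gseq; ring
    rw [hev] at h1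
    have hc := C_eq p j0 C hp hj0 hC
    have : p * (Real.sign C * j0 / (j * (j + 1)) * m) = C / (j * (j + 1)) * m := by
      rw [show p * (Real.sign C * j0 / (j * (j + 1)) * m)
          = (Real.sign C * (j0 * p)) / (j * (j + 1)) * m by ring, hc]
    rwa [this] at h1
  · exact (eps_alpha p j0 C hp hj0 hC (j + 1) (by linarith)).mul_const _
end
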